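/- Let n ≥ 1, δ ∈ (0,1), and set α = (1 + δ)/2. Let (K, Enc, Dec) be a finitary messageless secret-key code over the binary alphabet {0,1} with codeword length n and soundness error ε_s. Let f be the truncated uniform resampler with budget αn (over {0,1}^n), applied to γ = Enc(sk), and suppose P[Dec(sk, f(γ)) ≠ tampered ∧ f(γ) ≠ γ] ≤ ε_t. Then ε_s + ε_t ≥ 1 − 2^{−n} − exp(−δ²n/6). -/

import Mathlib

open Finset Classical

/-- Decoding outcomes of a messageless secret-key code. -/
inductive DecOut where
  | valid
  | invalid
  | tampered
deriving DecidableEq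

/-- The truncated uniform resampler with budget `b` over `{0,1}^n`: on codeword `γ` and
uniform randomness `u`, it outputs `u` if `dist(u, γ) ≤ b` and `γ` otherwise. -/
noncomputable def resample {n : ℕ} (b : ℝ) (γ u : Fin n → Bool) : Fin n → Bool :=
  if (hammingDist u γ : ℝ) ≤ b then u else γ

lemma hamming_mgf {n : ℕ} (γ : Fin n → Bool) (t : ℝ) :
    ∑ u : Fin n → Bool, Real.exp (t * hammingDist u γ) = (Real.exp t + 1) ^ n := by
  have key : ∀ u : Fin n → Bool,
      Real.exp (t * hammingDist u γ) = ∏ i, (if u i ≠ γ i then Real.exp t else 1) := by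
    intro u
    have hd : (hammingDist u γ : ℝ) = ∑ i, (if u i ≠ γ i then (1 : ℝ) else 0) := by
      rw [hammingDist, Finset.card_filter]
      push_cast
      rfl
    rw [hd, Finset.mul_sum, Real.exp_sum]
    congr 1 with i
    split_ifs <;> simp
  simp_rw [key]
  rw [← Fintype.prod_sum fun (i : Fin n) (b : Bool) => if b ≠ γ i then Real.exp t else 1]
  have : ∀ i : Fin n, (∑ b : Bool, if b ≠ γ i then Real.exp t else 1) = Real.exp t + 1 := by
    intro i
    cases h : γ i <;> simp [Fintype.sum_bool] <;> ring
  simp_rw [this]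
  simp

lemma chernoff_count {n : ℕ} (γ : Fin n → Bool) (δ : ℝ) (hδ0 : 0 < δ) (hδ1 : δ < 1) :
    (∑ u : Fin n → Bool, if ¬((hammingDist u γ : ℝ) ≤ (1 + δ) / 2 * n) then (1:ℝ) else 0)
      ≤ 2 ^ n * Real.exp (-(δ ^ 2 * n / 6)) := by
  set t : ℝ := 2 * δ / 3 with ht
  have ht0 : 0 < t := by rw [ht]; positivity
  have ht1 : |t| ≤ 1 := by rw [abs_of_pos ht0, ht]; linarith
  -- exp t ≤ 1 + t + 3/4 t^2
  have hexp : Real.exp t ≤ 1 + t + 3 / 4 * t ^ 2 := by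
    have h := Real.exp_bound ht1 (n := 2) (by norm_num)
    have h2 := (abs_sub_le_iff.1 h).1
    have : ∑ m ∈ Finset.range 2, t ^ m / m.factorial = 1 + t := by
      simp [Finset.sum_range_succ]
    rw [this] at h2
    have habs : |t| ^ 2 = t ^ 2 := by rw [sq_abs]
    rw [habs] at h2
    norm_num at h2
    nlinarith [h2]
  have hfac : Real.exp t + 1 ≤ 2 * Real.exp (t / 2 + 3 / 8 * t ^ 2) := by
    have h1 : t / 2 + 3 / 8 * t ^ 2 + 1 ≤ Real.exp (t / 2 + 3 / 8 * t ^ 2) :=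
      Real.add_one_le_exp _
    nlinarith [h1]
  have hpt : ∀ u : Fin n → Bool,
      (if ¬((hammingDist u γ : ℝ) ≤ (1 + δ) / 2 * n) then (1:ℝ) else 0)
        ≤ Real.exp (t * hammingDist u γ - t * ((1 + δ) / 2 * n)) := by
    intro u
    by_cases h : (hammingDist u γ : ℝ) ≤ (1 + δ) / 2 * n
    · rw [if_neg (not_not_intro h)]
      positivity
    · rw [if_pos h]
      apply Real.one_le_exp
      have hlt : (1 + δ) / 2 * n < (hammingDist u γ : ℝ) := lt_of_not_ge h
      nlinarith
  calc (∑ u : Fin n → Bool, if ¬((hammingDist u γ : ℝ) ≤ (1 + δ) / 2 * n) then (1:ℝ) else 0)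
      ≤ ∑ u : Fin n → Bool, Real.exp (t * hammingDist u γ - t * ((1 + δ) / 2 * n)) :=
        Finset.sum_le_sum fun u _ => hpt u
    _ = Real.exp (-(t * ((1 + δ) / 2 * n))) * ∑ u : Fin n → Bool, Real.exp (t * hammingDist u γ) := by
        rw [Finset.mul_sum]
        congr 1 with u
        rw [← Real.exp_add]
        ring_nf
    _ = Real.exp (-(t * ((1 + δ) / 2 * n))) * (Real.exp t + 1) ^ n := by rw [hamming_mgf]
    _ ≤ Real.exp (-(t * ((1 + δ) / 2 * n))) * (2 * Real.exp (t / 2 + 3 / 8 * t ^ 2)) ^ n := by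
        apply mul_le_mul_of_nonneg_left _ (Real.exp_nonneg _)
        exact pow_le_pow_left₀ (by positivity) hfac n
    _ = 2 ^ n * Real.exp (-(δ ^ 2 * n / 6)) := by
        rw [mul_pow, ← Real.exp_nat_mul, ← mul_assoc, mul_comm (Real.exp _) ((2:ℝ)^n),
          mul_assoc, ← Real.exp_add]
        congr 2
        rw [ht]
        ring

/-- Binary case: for `δ ∈ (0,1)` and `α = (1 + δ)/2`, any messageless
secret-key code over `{0,1}` with soundness error `εs` whose tamper-detection failure
against the truncated uniform resampler with budget `α·n` is at most `εt` satisfies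
`εs + εt ≥ 1 - 2^(-n) - exp(-δ²n/6)`. -/
theorem stmt_2
    {K : Type} [Fintype K] [Nonempty K]
    {n : ℕ} (hn : 1 ≤ n)
    (δ : ℝ) (hδ0 : 0 < δ) (hδ1 : δ < 1)
    (w : K → ℝ) (hw0 : ∀ k, 0 ≤ w k) (hw1 : ∑ k, w k = 1)
    (Enc : K → Fin n → Bool) (Dec : K → (Fin n → Bool) → DecOut)
    (εs εt : ℝ)
    (hsound : ∀ γ : Fin n → Bool,
      (∑ k, if Dec k γ ≠ DecOut.invalid then w k else 0) ≤ εs)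
    (htamper :
      (∑ k, ∑ u : Fin n → Bool,
        if Dec k (resample ((1 + δ) / 2 * n) (Enc k) u) ≠ DecOut.tampered
           ∧ resample ((1 + δ) / 2 * n) (Enc k) u ≠ Enc k
        then w k * ((2 : ℝ) ^ n)⁻¹ else 0) ≤ εt) :
    1 - ((2 : ℝ) ^ n)⁻¹ - Real.exp (-(δ ^ 2 * n / 6)) ≤ εs + εt := by
  set c : ℝ := ((2 : ℝ) ^ n)⁻¹ with hc
  have hc0 : 0 ≤ c := by positivity
  have hcard : (Fintype.card (Fin n → Bool) : ℝ) = 2 ^ n := by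
    simp [Fintype.card_fun]
  have hcsum : ∑ _u : Fin n → Bool, c = 1 := by
    rw [Finset.sum_const, Finset.card_univ, nsmul_eq_mul, hcard, hc]
    field_simp
  -- pointwise decomposition
  have hpt : ∀ (k : K) (u : Fin n → Bool),
      w k * c ≤
        (if u = Enc k then w k * c else 0)
        + (if ¬((hammingDist u (Enc k) : ℝ) ≤ (1 + δ) / 2 * n) then w k * c else 0)
        + (if Dec k (resample ((1 + δ) / 2 * n) (Enc k) u) ≠ DecOut.tampered
             ∧ resample ((1 + δ) / 2 * n) (Enc k) u ≠ Enc k then w k * c else 0)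
        + (if Dec k u ≠ DecOut.invalid then w k * c else 0) := by
    intro k u
    have hwc : 0 ≤ w k * c := mul_nonneg (hw0 k) hc0
    have p1 : (0:ℝ) ≤ (if u = Enc k then w k * c else 0) := by
      split_ifs <;> first | exact hwc | exact le_rfl
    have p2 : (0:ℝ) ≤ (if ¬((hammingDist u (Enc k) : ℝ) ≤ (1 + δ) / 2 * n) then w k * c else 0) := by
      split_ifs <;> first | exact hwc | exact le_rfl
    have p3 : (0:ℝ) ≤ (if Dec k (resample ((1 + δ) / 2 * n) (Enc k) u) ≠ DecOut.tampered
        ∧ resample ((1 + δ) / 2 * n) (Enc k) u ≠ Enc k then w k * c else 0) := by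
      split_ifs <;> first | exact hwc | exact le_rfl
    have p4 : (0:ℝ) ≤ (if Dec k u ≠ DecOut.invalid then w k * c else 0) := by
      split_ifs <;> first | exact hwc | exact le_rfl
    by_cases h1 : u = Enc k
    · rw [if_pos h1]
      linarith
    · by_cases h2 : (hammingDist u (Enc k) : ℝ) ≤ (1 + δ) / 2 * n
      · have hres : resample ((1 + δ) / 2 * n) (Enc k) u = u := by
          rw [resample, if_pos h2]
        by_cases h3 : Dec k u = DecOut.tampered
        · have h4 : Dec k u ≠ DecOut.invalid := by simp [h3]
          rw [if_pos h4]
          linarith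
        · have hcond : Dec k (resample ((1 + δ) / 2 * n) (Enc k) u) ≠ DecOut.tampered
              ∧ resample ((1 + δ) / 2 * n) (Enc k) u ≠ Enc k := by
            rw [hres]; exact ⟨h3, h1⟩
          rw [if_pos hcond]
          linarith
      · rw [if_pos h2]
        linarith
  -- sum up
  have hone : (∑ k, ∑ _u : Fin n → Bool, w k * c) = 1 := by
    rw [← hw1]
    congr 1 with k
    rw [← Finset.mul_sum, hcsum, mul_one]
  have hbig : (∑ k, ∑ _u : Fin n → Bool, w k * c) ≤
      (∑ k, ∑ u : Fin n → Bool, if u = Enc k then w k * c else 0)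
      + (∑ k, ∑ u : Fin n → Bool,
          if ¬((hammingDist u (Enc k) : ℝ) ≤ (1 + δ) / 2 * n) then w k * c else 0)
      + (∑ k, ∑ u : Fin n → Bool,
          if Dec k (resample ((1 + δ) / 2 * n) (Enc k) u) ≠ DecOut.tampered
             ∧ resample ((1 + δ) / 2 * n) (Enc k) u ≠ Enc k then w k * c else 0)
      + (∑ k, ∑ u : Fin n → Bool, if Dec k u ≠ DecOut.invalid then w k * c else 0) := by
    rw [← Finset.sum_add_distrib, ← Finset.sum_add_distrib, ← Finset.sum_add_distrib]
    apply Finset.sum_le_sum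
    intro k _
    rw [← Finset.sum_add_distrib, ← Finset.sum_add_distrib, ← Finset.sum_add_distrib]
    exact Finset.sum_le_sum fun u _ => hpt k u
  -- bound each sum
  have hS1 : (∑ k, ∑ u : Fin n → Bool, if u = Enc k then w k * c else 0) = c := by
    have : ∀ k, (∑ u : Fin n → Bool, if u = Enc k then w k * c else 0) = w k * c := by
      intro k
      rw [Finset.sum_ite_eq' Finset.univ (Enc k) (fun _ => w k * c), if_pos (Finset.mem_univ _)]
    simp_rw [this]
    rw [← Finset.sum_mul, hw1, one_mul]
  have hS2 : (∑ k, ∑ u : Fin n → Bool,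
      if ¬((hammingDist u (Enc k) : ℝ) ≤ (1 + δ) / 2 * n) then w k * c else 0)
      ≤ Real.exp (-(δ ^ 2 * n / 6)) := by
    have hk : ∀ k, (∑ u : Fin n → Bool,
        if ¬((hammingDist u (Enc k) : ℝ) ≤ (1 + δ) / 2 * n) then w k * c else 0)
        ≤ w k * Real.exp (-(δ ^ 2 * n / 6)) := by
      intro k
      have heq : (∑ u : Fin n → Bool,
          if ¬((hammingDist u (Enc k) : ℝ) ≤ (1 + δ) / 2 * n) then w k * c else 0)
          = w k * c * ∑ u : Fin n → Bool,
            (if ¬((hammingDist u (Enc k) : ℝ) ≤ (1 + δ) / 2 * n) then (1:ℝ) else 0) := by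
        rw [Finset.mul_sum]
        congr 1 with u
        split_ifs <;> simp
      rw [heq]
      have hcount := chernoff_count (Enc k) δ hδ0 hδ1
      calc w k * c * ∑ u : Fin n → Bool,
            (if ¬((hammingDist u (Enc k) : ℝ) ≤ (1 + δ) / 2 * n) then (1:ℝ) else 0)
          ≤ w k * c * (2 ^ n * Real.exp (-(δ ^ 2 * n / 6))) := by
            apply mul_le_mul_of_nonneg_left hcount (mul_nonneg (hw0 k) hc0)
        _ = w k * Real.exp (-(δ ^ 2 * n / 6)) := by
            rw [hc]
            field_simp
    calc (∑ k, ∑ u : Fin n → Bool,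
        if ¬((hammingDist u (Enc k) : ℝ) ≤ (1 + δ) / 2 * n) then w k * c else 0)
        ≤ ∑ k, w k * Real.exp (-(δ ^ 2 * n / 6)) := Finset.sum_le_sum fun k _ => hk k
      _ = Real.exp (-(δ ^ 2 * n / 6)) := by rw [← Finset.sum_mul, hw1, one_mul]
  have hS4 : (∑ k, ∑ u : Fin n → Bool, if Dec k u ≠ DecOut.invalid then w k * c else 0) ≤ εs := by
    rw [Finset.sum_comm]
    have hu : ∀ u : Fin n → Bool,
        (∑ k, if Dec k u ≠ DecOut.invalid then w k * c else 0) ≤ εs * c := by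
      intro u
      have heq : (∑ k, if Dec k u ≠ DecOut.invalid then w k * c else 0)
          = (∑ k, if Dec k u ≠ DecOut.invalid then w k else 0) * c := by
        rw [Finset.sum_mul]
        congr 1 with k
        split_ifs <;> simp
      rw [heq]
      exact mul_le_mul_of_nonneg_right (hsound u) hc0
    calc (∑ u : Fin n → Bool, ∑ k, if Dec k u ≠ DecOut.invalid then w k * c else 0)
        ≤ ∑ _u : Fin n → Bool, εs * c := Finset.sum_le_sum fun u _ => hu u
      _ = εs := by rw [Finset.sum_const, Finset.card_univ, nsmul_eq_mul, hcard, hc]; field_simp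
  have hS3 := htamper
  rw [hone] at hbig
  linarith
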